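/- (Matching condition in the symmetric case.) Let θ ∈ (1/2,1), γ ∈ (0,1), D = 1 − 4γ²θ(1−θ), ζ_− = ln((1 − √D)/(2γθ)) / ln((1−θ)/θ), and C = γ(2θ−1)² / ((1−γ)√D). Then the function v(β) = (1 + β(2θ−1))/(2(1−γ)) + C ((1−β)/2)^{ζ_−} ((1+β)/2)^{1−ζ_−} satisfies the matching condition at the decision boundary β = 0 of the symmetric bandit: v(0) = 1/2 + γ v(2θ−1). -/

import Mathlib

/-!
Matching condition in the symmetric two-state Bernoulli bandit.  With
`D = 1 − 4γ²θ(1−θ)`, `ζ_− = ln((1 − √D)/(2γθ)) / ln((1−θ)/θ)` and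
`C = γ(2θ−1)² / ((1−γ)√D)`, the candidate optimal value
`v(β) = (1 + β(2θ−1))/(2(1−γ)) + C ((1−β)/2)^{ζ_−} ((1+β)/2)^{1−ζ_−}`
satisfies the matching condition at the decision boundary `β = 0`:
`v(0) = 1/2 + γ v(2θ−1)`.
-/

/-- The discriminant `D = 1 − 4γ²θ(1−θ)`. -/
noncomputable def Dq (θ γ : ℝ) : ℝ := 1 - 4 * γ ^ 2 * θ * (1 - θ)

/-- The exponent `ζ_− = ln((1 − √D)/(2γθ)) / ln((1−θ)/θ)`. -/
noncomputable def zetaMinus (θ γ : ℝ) : ℝ :=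
  Real.log ((1 - Real.sqrt (Dq θ γ)) / (2 * γ * θ)) / Real.log ((1 - θ) / θ)

/-- The ansatz value function
`v(β) = (1 + β(2θ−1))/(2(1−γ)) + C ((1−β)/2)^ζ ((1+β)/2)^{1−ζ}`. -/
noncomputable def vSol (θ γ ζ C β : ℝ) : ℝ :=
  (1 + β * (2 * θ - 1)) / (2 * (1 - γ))
    + C * ((1 - β) / 2) ^ ζ * ((1 + β) / 2) ^ (1 - ζ)

theorem symmetric_matching_condition
    (θ γ : ℝ) (hθ : θ ∈ Set.Ioo (1 / 2 : ℝ) 1) (hγ : γ ∈ Set.Ioo (0 : ℝ) 1) :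
    vSol θ γ (zetaMinus θ γ)
        (γ * (2 * θ - 1) ^ 2 / ((1 - γ) * Real.sqrt (Dq θ γ))) 0
      = 1 / 2
        + γ * vSol θ γ (zetaMinus θ γ)
            (γ * (2 * θ - 1) ^ 2 / ((1 - γ) * Real.sqrt (Dq θ γ))) (2 * θ - 1) := by
  obtain ⟨hθ1, hθ2⟩ := hθ
  obtain ⟨hγ1, hγ2⟩ := hγ
  have hθ0 : (0:ℝ) < θ := by linarith
  have h1θ : (0:ℝ) < 1 - θ := by linarith
  have hD : 0 < Dq θ γ := by
    unfold Dq
    nlinarith [sq_nonneg (2*θ-1), sq_nonneg γ, sq_nonneg (1-γ), mul_pos hθ0 h1θ]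
  set s := Real.sqrt (Dq θ γ) with hs_def
  have hs : 0 < s := Real.sqrt_pos.mpr hD
  have hD1 : Dq θ γ < 1 := by
    unfold Dq
    nlinarith [mul_pos hθ0 h1θ, sq_nonneg γ, mul_pos hγ1 hγ1]
  have hs1 : s < 1 := by
    rw [hs_def, show (1:ℝ) = Real.sqrt 1 by simp]
    exact Real.sqrt_lt_sqrt hD.le hD1
  set ζ := zetaMinus θ γ with hζ_def
  have hx : 0 < (1 - s) / (2 * γ * θ) := div_pos (by linarith) (by positivity)
  have hb0 : (0:ℝ) < (1 - θ) / θ := by positivity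
  have hb1 : (1 - θ) / θ < 1 := by
    rw [div_lt_one hθ0]; linarith
  have hlogb : Real.log ((1 - θ) / θ) ≠ 0 := ne_of_lt (Real.log_neg hb0 hb1)
  have hζl : Real.log ((1 - θ) / θ) * ζ = Real.log ((1 - s) / (2 * γ * θ)) := by
    rw [hζ_def]; unfold zetaMinus
    rw [← hs_def]; field_simp
  have key2 : ((1 - θ) / θ : ℝ) ^ ζ = (1 - s) / (2 * γ * θ) := by
    rw [Real.rpow_def_of_pos hb0, hζl, Real.exp_log hx]
  have key1 : ((1:ℝ)/2) ^ ζ * ((1:ℝ)/2) ^ (1 - ζ) = 1/2 := by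
    rw [← Real.rpow_add (by norm_num : (0:ℝ) < 1/2)]
    rw [show ζ + (1 - ζ) = 1 by ring, Real.rpow_one]
  have key3 : (1 - θ : ℝ) ^ ζ * θ ^ (1 - ζ) = (1 - s) / (2 * γ) := by
    rw [Real.rpow_sub hθ0, Real.rpow_one]
    rw [show (1-θ:ℝ)^ζ * (θ/θ^ζ) = ((1-θ)^ζ/θ^ζ) * θ by ring]
    rw [← Real.div_rpow h1θ.le hθ0.le, key2]
    field_simp
  unfold vSol
  rw [show (1 - (0:ℝ))/2 = 1/2 by norm_num, show (1 + (0:ℝ))/2 = 1/2 by norm_num,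
    show (1 - (2*θ-1))/2 = 1 - θ by ring, show (1 + (2*θ-1))/2 = θ by ring]
  rw [mul_assoc, mul_assoc, key1, key3]
  have h1γ : (1:ℝ) - γ ≠ 0 := by linarith
  field_simp
  ring
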